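/- Let α ∈ (π/4, π] and β ∈ [0, 3π/4) with cos α · cos β − sin(α − β) < 0. Let p : [0,1] → ℝ be continuous and strictly positive, let λ, ν ∈ ℝ, and let u, v : [0,1] → ℝ be twice continuously differentiable, strictly positive on (0,1), both satisfying BC(α,β), with −u''(x) = λ·p(x)·u(x) and −v''(x) = ν·v(x) for all x ∈ [0,1]. Then ν > 0 and λ > 0. -/

import Mathlib

open Real

/-- Separated boundary conditions BC(α,β) on [0,1]. -/
def BC (α β : ℝ) (w : ℝ → ℝ) : Prop :=
  w 0 * Real.cos α + deriv w 0 * Real.sin α = 0 ∧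
  w 1 * Real.cos β + deriv w 1 * Real.sin β = 0

set_option maxHeartbeats 1000000 in
lemma key_lemma (α β : ℝ)
    (hα : α ∈ Set.Ioc (Real.pi / 4) Real.pi)
    (hβ : β ∈ Set.Ico (0:ℝ) (3 * Real.pi / 4))
    (hcond : Real.cos α * Real.cos β - Real.sin (α - β) < 0)
    (p : ℝ → ℝ) (hp : Continuous p)
    (hppos : ∀ x ∈ Set.Icc (0:ℝ) 1, 0 < p x)
    (l : ℝ) (u : ℝ → ℝ)
    (hu : ContDiff ℝ 2 u)
    (hupos : ∀ x ∈ Set.Ioo (0:ℝ) 1, 0 < u x)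
    (hubc : BC α β u)
    (huode : ∀ x ∈ Set.Icc (0:ℝ) 1, -(deriv (deriv u) x) = l * p x * u x)
    (hl : l ≤ 0) : False := by
  have hπ := Real.pi_pos
  -- differentiability facts
  have hu2 : ContDiff ℝ (1+1 : ℕ) u := by exact_mod_cast hu
  have hud : Differentiable ℝ u := hu2.differentiable (by norm_num)
  have hu' : ContDiff ℝ 1 (deriv u) :=
    ((contDiff_succ_iff_deriv (n := 1)).mp (by exact_mod_cast hu : ContDiff ℝ (1+1) u)).2.2
  have hud' : Differentiable ℝ (deriv u) := hu'.differentiable (by norm_num)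
  -- nonnegativity at endpoints
  have hu0 : 0 ≤ u 0 := by
    have ht : Filter.Tendsto u (nhdsWithin 0 (Set.Ioi 0)) (nhds (u 0)) :=
      (hud.continuous.continuousWithinAt)
    refine ge_of_tendsto ht ?_
    filter_upwards [Ioo_mem_nhdsGT_of_mem (Set.left_mem_Ico.mpr one_pos)] with x hx
    exact (hupos x hx).le
  have hu1 : 0 ≤ u 1 := by
    have ht : Filter.Tendsto u (nhdsWithin 1 (Set.Iio 1)) (nhds (u 1)) :=
      (hud.continuous.continuousWithinAt)
    refine ge_of_tendsto ht ?_
    filter_upwards [Ioo_mem_nhdsLT_of_mem (Set.right_mem_Ioc.mpr one_pos)] with x hx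
    exact (hupos x hx).le
  have hun : ∀ x ∈ Set.Icc (0:ℝ) 1, 0 ≤ u x := by
    intro x hx
    rcases eq_or_lt_of_le hx.1 with h0 | h0
    · rw [← h0]; exact hu0
    rcases eq_or_lt_of_le hx.2 with h1 | h1
    · rw [h1]; exact hu1
    exact (hupos x ⟨h0, h1⟩).le
  -- u'' ≥ 0 on [0,1]
  have hdd : ∀ x ∈ Set.Icc (0:ℝ) 1, 0 ≤ deriv (deriv u) x := by
    intro x hx
    have h1 := huode x hx
    have h2 : l * p x * u x ≤ 0 := by
      nlinarith [mul_nonpos_of_nonpos_of_nonneg hl (mul_nonneg (hppos x hx).le (hun x hx))]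
    linarith [h1, h2]
  -- deriv u monotone on [0,1]
  have hmono : MonotoneOn (deriv u) (Set.Icc (0:ℝ) 1) := by
    apply monotoneOn_of_deriv_nonneg (convex_Icc 0 1) hu'.continuous.continuousOn
      (hud'.differentiableOn)
    intro x hx
    rw [interior_Icc] at hx
    exact hdd x ⟨hx.1.le, hx.2.le⟩
  -- mean value theorem
  obtain ⟨c, hc, hcs⟩ := exists_deriv_eq_slope u (by norm_num : (0:ℝ) < 1)
    hud.continuous.continuousOn hud.differentiableOn
  have hcs' : deriv u c = u 1 - u 0 := by rw [hcs]; ring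
  have key1 : deriv u 0 ≤ u 1 - u 0 := by
    rw [← hcs']
    exact hmono (Set.left_mem_Icc.mpr one_pos.le) ⟨hc.1.le, hc.2.le⟩ hc.1.le
  have key2 : u 1 - u 0 ≤ deriv u 1 := by
    rw [← hcs']
    exact hmono ⟨hc.1.le, hc.2.le⟩ (Set.right_mem_Icc.mpr one_pos.le) hc.2.le
  obtain ⟨A0, A1⟩ := hubc
  -- trig facts
  have hsc : Real.cos α < Real.sin α := by
    have h1 : 0 < Real.sin (α - Real.pi / 4) :=
      Real.sin_pos_of_pos_of_lt_pi (by linarith [hα.1]) (by linarith [hα.2])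
    rw [Real.sin_sub, Real.cos_pi_div_four, Real.sin_pi_div_four] at h1
    nlinarith [Real.sq_sqrt (by norm_num : (2:ℝ) ≥ 0), Real.sqrt_nonneg 2,
      Real.sqrt_pos.mpr (by norm_num : (0:ℝ) < 2)]
  have hcond' : Real.sin α * Real.sin β <
      (Real.sin α - Real.cos α) * (Real.sin β + Real.cos β) := by
    rw [Real.sin_sub] at hcond
    nlinarith [hcond]
  have hsb0 : 0 ≤ Real.sin β :=
    Real.sin_nonneg_of_nonneg_of_le_pi hβ.1 (by linarith [hβ.2])
  have hsa0 : 0 ≤ Real.sin α :=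
    Real.sin_nonneg_of_nonneg_of_le_pi (by linarith [hα.1]) hα.2
  have hbc : 0 < Real.sin β + Real.cos β := by
    by_contra h
    push_neg at h
    nlinarith [mul_nonneg hsa0 hsb0,
      mul_nonpos_of_nonneg_of_nonpos (by linarith [hsc] : (0:ℝ) ≤ Real.sin α - Real.cos α) h]
  have hsa : 0 < Real.sin α ∨ α = Real.pi := by
    rcases lt_or_eq_of_le hα.2 with h | h
    · exact Or.inl (Real.sin_pos_of_pos_of_lt_pi (by linarith [hα.1]) h)
    · exact Or.inr h
  have hsb : 0 < Real.sin β ∨ β = 0 := by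
    rcases eq_or_lt_of_le hβ.1 with h | h
    · exact Or.inr h.symm
    · exact Or.inl (Real.sin_pos_of_pos_of_lt_pi h (by linarith [hβ.2]))
  -- the derivative at 0 is nonneg if u 0 = 0
  have hd0 : u 0 = 0 → 0 ≤ deriv u 0 := by
    intro h0
    have hda : HasDerivAt u (deriv u 0) 0 := (hud 0).hasDerivAt
    have ht := hasDerivAt_iff_tendsto_slope.mp hda
    have ht' : Filter.Tendsto (slope u 0) (nhdsWithin 0 (Set.Ioi 0)) (nhds (deriv u 0)) :=
      ht.mono_left (nhdsWithin_mono _ (fun x hx => ne_of_gt hx))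
    refine ge_of_tendsto ht' ?_
    filter_upwards [Ioo_mem_nhdsGT_of_mem (Set.left_mem_Ico.mpr one_pos)] with x hx
    have hx0 : (0:ℝ) < x := hx.1
    have := hupos x hx
    have hs : slope u 0 x = (u x - u 0) / (x - 0) := slope_def_field u 0 x
    rw [hs, h0, sub_zero, sub_zero]
    exact div_nonneg (hupos x hx).le hx0.le
  -- inequalities from boundary conditions
  have hA : (Real.sin α - Real.cos α) * u 0 ≤ Real.sin α * u 1 := by
    nlinarith [mul_le_mul_of_nonneg_right key1 hsa0, A0]
  have hB : (Real.sin β + Real.cos β) * u 1 ≤ Real.sin β * u 0 := by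
    nlinarith [mul_le_mul_of_nonneg_right key2 hsb0, A1]
  -- conclude u 0 = 0 and deriv u 0 = 0
  have h00 : u 0 = 0 ∧ deriv u 0 = 0 := by
    rcases hsa with hsa | hapi
    · -- sin α > 0
      have hu0z : u 0 = 0 := by
        rcases hsb with hsb | hb0
        · -- main case: both sines positive
          by_contra hne
          have hpos : 0 < u 0 := lt_of_le_of_ne hu0 (Ne.symm hne)
          nlinarith [mul_le_mul_of_nonneg_left hA hbc.le,
            mul_le_mul_of_nonneg_left hB hsa.le,
            mul_lt_mul_of_pos_right hcond' hpos]
        · -- β = 0 : u 1 = 0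
          have hu1z : u 1 = 0 := by
            rw [hb0, Real.cos_zero, Real.sin_zero] at A1
            linarith [A1]
          nlinarith [hA, hsc, hu0]
      refine ⟨hu0z, ?_⟩
      rw [hu0z, zero_mul, zero_add] at A0
      exact (mul_eq_zero.mp A0).resolve_right (ne_of_gt hsa)
    · -- α = π
      have hu0z : u 0 = 0 := by
        rw [hapi, Real.cos_pi, Real.sin_pi] at A0
        linarith [A0]
      refine ⟨hu0z, ?_⟩
      have hu1z : u 1 = 0 := by
        rcases hsb with hsb | hb0
        · have h1 : (Real.sin β + Real.cos β) * u 1 ≤ 0 := by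
            rw [hu0z] at hB; linarith [hB]
          nlinarith [hbc, hu1]
        · rw [hb0, Real.cos_zero, Real.sin_zero] at A1
          linarith [A1]
      have h1 : deriv u 0 ≤ 0 := by rw [hu0z, hu1z] at key1; linarith
      linarith [hd0 hu0z]
  obtain ⟨hu0z, hd0z⟩ := h00
  -- Gronwall-type argument: u ≡ 0, contradiction
  obtain ⟨xm, hxm, hxmax⟩ := isCompact_Icc.exists_isMaxOn
    (Set.nonempty_Icc.mpr one_pos.le) hp.continuousOn
  set M := p xm with hM
  have hMpos : 0 < M := hppos xm hxm
  set K := (-l) * M + 1 with hK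
  have hK1 : 1 ≤ K := by nlinarith
  have hdn : ∀ x ∈ Set.Icc (0:ℝ) 1, 0 ≤ deriv u x := by
    intro x hx
    have := hmono (Set.left_mem_Icc.mpr one_pos.le) hx hx.1
    rw [hd0z] at this
    exact this
  have hbound : ∀ x ∈ Set.Icc (0:ℝ) 1, deriv (deriv u) x ≤ K * u x := by
    intro x hx
    have h1 := huode x hx
    have h2 : deriv (deriv u) x = (-l) * p x * u x := by linarith [h1]
    rw [h2]
    have hpx := hppos x hx
    have hpM : p x ≤ M := hxmax hx
    have hux := hun x hx
    nlinarith [mul_le_mul_of_nonneg_right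
      (mul_le_mul_of_nonneg_left hpM (neg_nonneg.mpr hl)) hux]
  set f : ℝ → ℝ := fun x => (u x + deriv u x) * Real.exp (-(K * x)) with hf
  have hfd : ∀ x : ℝ, HasDerivAt f
      ((deriv u x + deriv (deriv u) x) * Real.exp (-(K * x)) +
        (u x + deriv u x) * (Real.exp (-(K * x)) * (-K))) x := by
    intro x
    have h1 : HasDerivAt u (deriv u x) x := (hud x).hasDerivAt
    have h2 : HasDerivAt (deriv u) (deriv (deriv u) x) x := (hud' x).hasDerivAt
    have h3 : HasDerivAt (fun y : ℝ => -(K * y)) (-K) x := by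
      have := ((hasDerivAt_id x).const_mul K).neg
      exact ((hasDerivAt_id' x).const_mul K).neg.congr_deriv (by ring)
    have h4 : HasDerivAt (fun y : ℝ => Real.exp (-(K * y)))
        (Real.exp (-(K * x)) * (-K)) x := h3.exp
    exact (h1.add h2).mul h4
  have hfmono : AntitoneOn f (Set.Icc (0:ℝ) 1) := by
    apply antitoneOn_of_deriv_nonpos (convex_Icc 0 1)
    · exact (Continuous.mul (hud.continuous.add hu'.continuous)
        (Real.continuous_exp.comp (continuous_const.mul continuous_id).neg)).continuousOn
    · intro x hx
      exact (hfd x).differentiableAt.differentiableWithinAt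
    · intro x hx
      rw [interior_Icc] at hx
      have hx' : x ∈ Set.Icc (0:ℝ) 1 := ⟨hx.1.le, hx.2.le⟩
      rw [(hfd x).deriv]
      have he : 0 < Real.exp (-(K * x)) := Real.exp_pos _
      have hb1 := hbound x hx'
      have hb2 := hdn x hx'
      have hb3 := hun x hx'
      nlinarith [mul_le_mul_of_nonneg_right hb1 he.le,
        mul_le_mul_of_nonneg_right (mul_le_mul_of_nonneg_left hb2 (by linarith : (0:ℝ) ≤ K - 1)) he.le]
  have hhalf : f (1/2) ≤ f 0 := hfmono (Set.left_mem_Icc.mpr one_pos.le)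
    (by norm_num) (by norm_num)
  have hf0 : f 0 = 0 := by
    simp only [hf, hu0z, hd0z, add_zero, zero_mul]
  have hfhalf : 0 < f (1/2) := by
    have h1 : 0 < u (1/2) := hupos _ (by norm_num)
    have h2 : 0 ≤ deriv u (1/2) := hdn _ (by norm_num)
    have h3 : 0 < Real.exp (-(K * (1/2))) := Real.exp_pos _
    simp only [hf]
    positivity
  linarith [hhalf, hf0, hfhalf]

/-- Second assertion of Theorem 3.3: the lowest eigenvalue λ₀(p,α,β) is
strictly positive whenever cos α cos β − sin(α−β) < 0 on (π/4, π] × [0, 3π/4). -/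
theorem stmt_17 (α β : ℝ)
    (hα : α ∈ Set.Ioc (Real.pi / 4) Real.pi)
    (hβ : β ∈ Set.Ico (0:ℝ) (3 * Real.pi / 4))
    (hcond : Real.cos α * Real.cos β - Real.sin (α - β) < 0)
    (p : ℝ → ℝ) (hp : Continuous p)
    (hppos : ∀ x ∈ Set.Icc (0:ℝ) 1, 0 < p x)
    (l ν : ℝ) (u v : ℝ → ℝ)
    (hu : ContDiff ℝ 2 u) (hv : ContDiff ℝ 2 v)
    (hupos : ∀ x ∈ Set.Ioo (0:ℝ) 1, 0 < u x)
    (hvpos : ∀ x ∈ Set.Ioo (0:ℝ) 1, 0 < v x)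
    (hubc : BC α β u) (hvbc : BC α β v)
    (huode : ∀ x ∈ Set.Icc (0:ℝ) 1, -(deriv (deriv u) x) = l * p x * u x)
    (hvode : ∀ x ∈ Set.Icc (0:ℝ) 1, -(deriv (deriv v) x) = ν * v x) :
    0 < ν ∧ 0 < l := by
  constructor
  · by_contra h
    push_neg at h
    exact key_lemma α β hα hβ hcond (fun _ => 1) continuous_const
      (fun x _ => one_pos) ν v hv hvpos hvbc
      (fun x hx => by simpa using hvode x hx) h
  · by_contra h
    push_neg at h
    exact key_lemma α β hα hβ hcond p hp hppos l u hu hupos hubc huode h
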